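/- Let (S_t, V_t) be adapted real processes with S_0 = V_0 = 0, V_t ≥ 0. Suppose for each λ ∈ [0, λ_max) there is a supermartingale L_t(λ) with L_0(λ) ≤ l_0 and exp{λ S_t − ψ(λ) V_t} ≤ L_t(λ) a.s. for all t. Then for any a, b > 0, P(∃t: S_t ≥ a + b V_t) ≤ l_0 · exp{−a D(b)}, where D(b) = sup{λ ∈ (0, λ_max): ψ(λ)/λ ≤ b} (with sup ∅ = 0). -/

import Mathlib

open MeasureTheory

open Finset in
/-- Ville's inequality (finite horizon) for a.e.-nonnegative supermartingales. -/
lemma ville_aux {Ω : Type*} {m : MeasurableSpace Ω} {μ : Measure Ω} [IsFiniteMeasure μ]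
    {ℱ : Filtration ℕ m} {L : ℕ → Ω → ℝ} (hL : Supermartingale L ℱ μ)
    (hae : ∀ t, 0 ≤ᵐ[μ] L t) {ε : ℝ} (hε : 0 < ε) (n : ℕ) :
    ENNReal.ofReal ε * μ {ω | ε ≤ (range (n + 1)).sup' nonempty_range_add_one fun k => L k ω}
      ≤ ENNReal.ofReal (∫ ω, L 0 ω ∂μ) := by
  classical
  set τ : Ω → WithTop ℕ := fun ω => (hittingBtwn L {y : ℝ | ε ≤ y} 0 n ω : ℕ) with hτdef
  have hτ : IsStoppingTime ℱ τ :=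
    hL.1.adapted.isStoppingTime_hittingBtwn measurableSet_Ici
  have hbdd : ∀ ω, τ ω ≤ n := fun ω => WithTop.coe_le_coe.2 (hittingBtwn_le ω)
  set A := {ω | ε ≤ (range (n + 1)).sup' nonempty_range_add_one fun k => L k ω} with hAdef
  have hA : MeasurableSet A :=
    measurableSet_le measurable_const
      (Finset.measurable_range_sup'' fun k _ =>
        (hL.stronglyMeasurable k).measurable.le (ℱ.le k))
  have hconst : ∀ ω ∈ A, ε ≤ stoppedValue L τ ω := by
    intro ω hω
    simp_rw [hAdef, Set.mem_setOf_eq, le_sup'_iff, mem_range, Nat.lt_succ_iff] at hω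
    refine stoppedValue_hittingBtwn_mem ?_
    obtain ⟨j, hj₁, hj₂⟩ := hω
    exact ⟨j, by simpa using hj₁, hj₂⟩
  have svint : Integrable (stoppedValue L τ) μ :=
    integrable_stoppedValue ℕ hτ hL.integrable hbdd
  have svnonneg : 0 ≤ᵐ[μ] stoppedValue L τ := by
    have h := ae_all_iff.2 hae
    filter_upwards [h] with ω hω
    exact hω (τ ω).untopA
  have h1 : ε * (μ A).toReal ≤ ∫ ω in A, stoppedValue L τ ω ∂μ :=
    by
      have := setIntegral_ge_of_const_le hA (measure_ne_top μ A) hconst svint.integrableOn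
      rwa [smul_eq_mul, mul_comm, measureReal_def] at this
  have h2 : ∫ ω in A, stoppedValue L τ ω ∂μ ≤ ∫ ω, stoppedValue L τ ω ∂μ :=
    setIntegral_le_integral svint svnonneg
  have h3 : ∫ ω, stoppedValue L τ ω ∂μ ≤ ∫ ω, L 0 ω ∂μ := by
    have : ∫ x, stoppedValue (-L) (fun _ => ((0 : ℕ) : WithTop ℕ)) x ∂μ ≤ ∫ x, stoppedValue (-L) τ x ∂μ :=
      hL.neg.expected_stoppedValue_mono (isStoppingTime_const ℱ 0) hτ
      (fun ω => WithTop.coe_le_coe.2 (Nat.zero_le _)) hbdd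
    have h0 : stoppedValue (-L) (fun _ => ((0 : ℕ) : WithTop ℕ)) = fun ω => -(L 0 ω) := rfl
    have hτv : stoppedValue (-L) τ = fun ω => -(stoppedValue L τ ω) := rfl
    rw [h0, hτv, integral_neg, integral_neg, neg_le_neg_iff] at this
    exact this
  have hmain : ε * (μ A).toReal ≤ ∫ ω, L 0 ω ∂μ := le_trans h1 (le_trans h2 h3)
  rw [ENNReal.le_ofReal_iff_toReal_le, ENNReal.toReal_mul, ENNReal.toReal_ofReal hε.le]
  · exact hmain
  · exact ENNReal.mul_ne_top ENNReal.ofReal_ne_top (measure_ne_top _ _)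
  · exact le_trans (mul_nonneg hε.le ENNReal.toReal_nonneg) hmain

/-- Time-uniform Chernoff bound (master theorem, part (a)): if `(S t)` is
`l₀`-sub-ψ with variance process `(V t)`, then for any `a, b > 0`,
`P(∃ t, S t ≥ a + b V t) ≤ l₀ exp(−a D(b))`, where
`D b = sSup {λ ∈ (0, λmax) : ψ λ / λ ≤ b}` (with `sSup ∅ = 0`). -/
theorem uniform_chernoff_line_crossing {Ω : Type*} {m : MeasurableSpace Ω}
    {μ : Measure Ω} [IsProbabilityMeasure μ]
    (ℱ : Filtration ℕ m) (S V : ℕ → Ω → ℝ) (ψ : ℝ → ℝ) (lmax l0 : ℝ)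
    (hl0 : 1 ≤ l0)
    (hS : Adapted ℱ S) (hV : Adapted ℱ V)
    (hS0 : ∀ ω, S 0 ω = 0) (hV0 : ∀ ω, V 0 ω = 0)
    (hVnonneg : ∀ t ω, 0 ≤ V t ω)
    (hsub : ∀ lam ∈ Set.Ico 0 lmax, ∃ L : ℕ → Ω → ℝ,
      Supermartingale L ℱ μ ∧ (∀ᵐ ω ∂μ, L 0 ω ≤ l0) ∧
      ∀ t, ∀ᵐ ω ∂μ, Real.exp (lam * S t ω - ψ lam * V t ω) ≤ L t ω)
    (a b : ℝ) (ha : 0 < a) (hb : 0 < b) :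
    μ {ω | ∃ t, a + b * V t ω ≤ S t ω}
      ≤ ENNReal.ofReal
          (l0 * Real.exp (-(a * sSup {l : ℝ | l ∈ Set.Ioo 0 lmax ∧ ψ l / l ≤ b}))) := by
  classical
  set T : Set ℝ := {l : ℝ | l ∈ Set.Ioo 0 lmax ∧ ψ l / l ≤ b} with hTdef
  set B : Set Ω := {ω | ∃ t, a + b * V t ω ≤ S t ω} with hBdef
  -- The key per-λ bound
  have key : ∀ lam ∈ T, μ B ≤ ENNReal.ofReal (l0 * Real.exp (-(a * lam))) := by
    rintro lam ⟨⟨hlam0, hlamlt⟩, hlamb⟩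
    obtain ⟨L, hLsm, hL0, hLexp⟩ := hsub lam ⟨hlam0.le, hlamlt⟩
    have hae : ∀ t, 0 ≤ᵐ[μ] L t := fun t =>
      (hLexp t).mono fun ω h => le_trans (Real.exp_nonneg _) h
    set ε : ℝ := Real.exp (lam * a) with hεdef
    have hε : 0 < ε := Real.exp_pos _
    set A : ℕ → Set Ω := fun n =>
      {ω | ε ≤ (Finset.range (n + 1)).sup' Finset.nonempty_range_add_one fun k => L k ω} with hAdef
    have hmono : Monotone A := by
      intro i j hij ω hω
      simp only [hAdef, Set.mem_setOf_eq, Finset.le_sup'_iff, Finset.mem_range] at hω ⊢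
      obtain ⟨k, hk, hk'⟩ := hω
      exact ⟨k, lt_of_lt_of_le hk (by omega), hk'⟩
    have hψ : ψ lam ≤ lam * b := by
      have := (div_le_iff₀ hlam0).mp hlamb
      linarith
    -- a.e. inclusion of B into ⋃ n, A n
    have hBsub : B ≤ᵐ[μ] ⋃ n, A n := by
      have hG := ae_all_iff.2 hLexp
      filter_upwards [hG] with ω hω hωB
      obtain ⟨t, ht⟩ := hωB
      have h1 : lam * a ≤ lam * S t ω - ψ lam * V t ω := by
        have h2 : lam * (a + b * V t ω) ≤ lam * S t ω :=
          mul_le_mul_of_nonneg_left ht hlam0.le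
        have h3 : ψ lam * V t ω ≤ lam * b * V t ω :=
          mul_le_mul_of_nonneg_right hψ (hVnonneg t ω)
        nlinarith
      have h4 : ε ≤ L t ω := le_trans (Real.exp_le_exp.2 h1) (hω t)
      refine Set.mem_iUnion.2 ⟨t, ?_⟩
      simp only [hAdef, Set.mem_setOf_eq, Finset.le_sup'_iff, Finset.mem_range]
      exact ⟨t, Nat.lt_succ_self t, h4⟩
    have hAbound : ∀ n, μ (A n) ≤ ENNReal.ofReal (l0 * Real.exp (-(a * lam))) := by
      intro n
      have hville := ville_aux hLsm hae hε n
      have hint : ∫ ω, L 0 ω ∂μ ≤ l0 := by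
        calc ∫ ω, L 0 ω ∂μ ≤ ∫ _, l0 ∂μ :=
              integral_mono_ae (hLsm.integrable 0) (integrable_const l0) hL0
          _ = l0 := by simp
      have hville' : ENNReal.ofReal ε * μ (A n) ≤ ENNReal.ofReal l0 :=
        le_trans hville (ENNReal.ofReal_le_ofReal hint)
      have hdiv : μ (A n) ≤ ENNReal.ofReal l0 / ENNReal.ofReal ε := by
        rw [ENNReal.le_div_iff_mul_le (Or.inl (by simpa using hε)) (Or.inl ENNReal.ofReal_ne_top)]
        rwa [mul_comm]
      refine le_trans hdiv (le_of_eq ?_)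
      rw [← ENNReal.ofReal_div_of_pos hε]
      congr 1
      rw [hεdef, Real.exp_neg, div_eq_mul_inv, mul_comm a lam]
    calc μ B ≤ μ (⋃ n, A n) := measure_mono_ae hBsub
      _ = ⨆ n, μ (A n) := hmono.directed_le.measure_iUnion
      _ ≤ ENNReal.ofReal (l0 * Real.exp (-(a * lam))) := iSup_le hAbound
  rcases T.eq_empty_or_nonempty with hT | hT
  · rw [hT, Real.sSup_empty, mul_zero, neg_zero, Real.exp_zero, mul_one]
    calc μ B ≤ μ Set.univ := measure_mono (Set.subset_univ _)
      _ = 1 := measure_univ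
      _ ≤ ENNReal.ofReal l0 := by
          rw [← ENNReal.ofReal_one]; exact ENNReal.ofReal_le_ofReal hl0
  · have hbd : BddAbove T := ⟨lmax, fun x hx => hx.1.2.le⟩
    obtain ⟨x, hxmono, hxtend, hxmem⟩ := exists_seq_tendsto_sSup hT hbd
    have htend : Filter.Tendsto (fun n => ENNReal.ofReal (l0 * Real.exp (-(a * x n))))
        Filter.atTop (nhds (ENNReal.ofReal (l0 * Real.exp (-(a * sSup T))))) := by
      have hc : Continuous fun y : ℝ => ENNReal.ofReal (l0 * Real.exp (-(a * y))) := by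
        exact ENNReal.continuous_ofReal.comp ((continuous_const.mul ((Real.continuous_exp.comp ((continuous_const.mul continuous_id).neg)))))
      exact (hc.tendsto _).comp hxtend
    exact ge_of_tendsto' htend fun n => key (x n) (hxmem n)
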